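/- In the data setting, the data (U₋, X, Y₋) are informative for controllability (i.e., rank [A − λI, B] = n for every A ∈ 𝒜_dat and every λ ∈ ℂ) if and only if ker M ⊆ im B and rank [R − λMX₋, MB] = rank M for all λ ∈ ℂ. The data are informative for stabilizability (the same with λ restricted to |λ| ≥ 1) if and only if ker M ⊆ im B and rank [R − λMX₋, MB] = rank M for all λ ∈ ℂ with |λ| ≥ 1. -/

import Mathlib

open Matrix

/-- Complexification of a real matrix. -/
noncomputable def cx {a b : ℕ} (M : Matrix (Fin a) (Fin b) ℝ) : Matrix (Fin a) (Fin b) ℂ :=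
  M.map (algebraMap ℝ ℂ)

/-- First T columns of the state data matrix X. -/
def Xminus {n T : ℕ} (X : Matrix (Fin n) (Fin (T + 1)) ℝ) : Matrix (Fin n) (Fin T) ℝ :=
  Matrix.of fun i t => X i t.castSucc

/-- Last T columns of the state data matrix X. -/
def Xplus {n T : ℕ} (X : Matrix (Fin n) (Fin (T + 1)) ℝ) : Matrix (Fin n) (Fin T) ℝ :=
  Matrix.of fun i t => X i t.succ

/-- The set of state matrices A consistent with the noisy data (U₋, X, Y₋). -/
def Adat {n m p q T : ℕ} (B : Matrix (Fin n) (Fin m) ℝ) (C : Matrix (Fin p) (Fin n) ℝ)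
    (D : Matrix (Fin p) (Fin m) ℝ) (E : Matrix (Fin n) (Fin q) ℝ)
    (F : Matrix (Fin p) (Fin q) ℝ) (U : Matrix (Fin m) (Fin T) ℝ)
    (X : Matrix (Fin n) (Fin (T + 1)) ℝ) (Y : Matrix (Fin p) (Fin T) ℝ) :
    Set (Matrix (Fin n) (Fin n) ℝ) :=
  {A | ∃ W : Matrix (Fin q) (Fin T) ℝ,
    Xplus X = A * Xminus X + B * U + E * W ∧ Y = C * Xminus X + D * U + F * W}

/- ############ Auxiliary material ############ -/

open Module LinearMap

section Aux

noncomputable def cxv {a : ℕ} (v : Fin a → ℝ) : Fin a → ℂ := fun i => (v i : ℂ)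
def rev {a : ℕ} (v : Fin a → ℂ) : Fin a → ℝ := fun i => (v i).re
def imv {a : ℕ} (v : Fin a → ℂ) : Fin a → ℝ := fun i => (v i).im

lemma cx_mul {a b c : ℕ} (P : Matrix (Fin a) (Fin b) ℝ) (Q : Matrix (Fin b) (Fin c) ℝ) :
    cx (P * Q) = cx P * cx Q := Matrix.map_mul

lemma cx_add {a b : ℕ} (P Q : Matrix (Fin a) (Fin b) ℝ) : cx (P + Q) = cx P + cx Q := by
  ext i j; simp [cx]

lemma rev_mulVec {a b : ℕ} (P : Matrix (Fin a) (Fin b) ℝ) (x : Fin b → ℂ) :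
    rev (cx P *ᵥ x) = P *ᵥ rev x := by
  funext i
  simp [rev, cx, mulVec, dotProduct, Complex.re_sum, Complex.mul_re]

lemma imv_mulVec {a b : ℕ} (P : Matrix (Fin a) (Fin b) ℝ) (x : Fin b → ℂ) :
    imv (cx P *ᵥ x) = P *ᵥ imv x := by
  funext i
  simp [imv, cx, mulVec, dotProduct, Complex.im_sum, Complex.mul_im]

lemma rev_vecMul {a b : ℕ} (z : Fin a → ℂ) (P : Matrix (Fin a) (Fin b) ℝ) :
    rev (z ᵥ* cx P) = rev z ᵥ* P := by
  funext j
  simp [rev, cx, vecMul, dotProduct, Complex.re_sum, Complex.mul_re]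

lemma imv_vecMul {a b : ℕ} (z : Fin a → ℂ) (P : Matrix (Fin a) (Fin b) ℝ) :
    imv (z ᵥ* cx P) = imv z ᵥ* P := by
  funext j
  simp [imv, cx, vecMul, dotProduct, Complex.im_sum, Complex.mul_im]

lemma cxv_vecMul {a b : ℕ} (z : Fin a → ℝ) (P : Matrix (Fin a) (Fin b) ℝ) :
    cxv z ᵥ* cx P = cxv (z ᵥ* P) := by
  funext j
  simp [cxv, cx, vecMul, dotProduct]

lemma cxv_mulVec {a b : ℕ} (P : Matrix (Fin a) (Fin b) ℝ) (x : Fin b → ℝ) :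
    cx P *ᵥ cxv x = cxv (P *ᵥ x) := by
  funext i
  simp [cxv, cx, mulVec, dotProduct]

lemma eq_zero_iff_rev_imv {a : ℕ} (z : Fin a → ℂ) : z = 0 ↔ rev z = 0 ∧ imv z = 0 := by
  constructor
  · rintro rfl; constructor <;> funext i <;> simp [rev, imv]
  · rintro ⟨h1, h2⟩; funext i
    have e1 := congrFun h1 i; have e2 := congrFun h2 i
    simp only [rev, imv, Pi.zero_apply] at e1 e2
    exact Complex.ext e1 e2

lemma ext_rev_imv {a : ℕ} {x y : Fin a → ℂ} (h1 : rev x = rev y) (h2 : imv x = imv y) :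
    x = y := by
  funext i
  exact Complex.ext (congrFun h1 i) (congrFun h2 i)

lemma cxv_eq_zero {a : ℕ} {v : Fin a → ℝ} : cxv v = 0 ↔ v = 0 := by
  constructor
  · intro h; funext i; simpa [cxv] using congrFun h i
  · rintro rfl; funext i; simp [cxv]

lemma cxv_smul {a : ℕ} (c : ℝ) (v : Fin a → ℝ) : (c : ℂ) • cxv v = cxv (c • v) := by
  funext i; simp [cxv]

lemma recomb {a : ℕ} (x : Fin a → ℂ) : cxv (rev x) + Complex.I • cxv (imv x) = x := by
  funext i
  simp [cxv, rev, imv, Complex.ext_iff]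

lemma mul_vecMulVec {a b c : ℕ} (P : Matrix (Fin a) (Fin b) ℝ) (x : Fin b → ℝ)
    (u : Fin c → ℝ) : P * vecMulVec x u = vecMulVec (P *ᵥ x) u := by
  ext i j
  simp only [Matrix.mul_apply, vecMulVec_apply, Matrix.mulVec, dotProduct, Finset.sum_mul]
  exact Finset.sum_congr rfl fun l _ => by ring

lemma vecMulVec_mul {a b c : ℕ} (x : Fin a → ℝ) (u : Fin b → ℝ)
    (P : Matrix (Fin b) (Fin c) ℝ) : vecMulVec x u * P = vecMulVec x (u ᵥ* P) := by
  ext i j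
  simp only [Matrix.mul_apply, vecMulVec_apply, Matrix.vecMul, dotProduct, Finset.mul_sum]
  exact Finset.sum_congr rfl fun l _ => by ring

lemma vecMul_vecMulVec {a b : ℕ} (z x : Fin a → ℝ) (u : Fin b → ℝ) :
    z ᵥ* vecMulVec x u = (z ⬝ᵥ x) • u := by
  funext j
  simp only [Matrix.vecMul, dotProduct, vecMulVec_apply, Pi.smul_apply, smul_eq_mul,
    Finset.sum_mul]
  exact Finset.sum_congr rfl fun l _ => by ring

lemma vecMulVec_zero' {a b : ℕ} (x : Fin a → ℝ) : vecMulVec x (0 : Fin b → ℝ) = 0 := by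
  ext i j; simp [vecMulVec_apply]

lemma zero_vecMulVec' {a b : ℕ} (u : Fin b → ℝ) : vecMulVec (0 : Fin a → ℝ) u = 0 := by
  ext i j; simp [vecMulVec_apply]

lemma mem_rowSpace_of {K : Type*} [Field K] {a b : ℕ} (P : Matrix (Fin a) (Fin b) K)
    (z : Fin b → K) (h : ∀ x : Fin b → K, P *ᵥ x = 0 → z ⬝ᵥ x = 0) :
    ∃ v : Fin a → K, z = v ᵥ* P := by
  by_contra hc
  push_neg at hc
  have hz : z ∉ LinearMap.range Pᵀ.mulVecLin := by
    rintro ⟨v, hv⟩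
    exact hc v (by rw [← hv]; simp [Matrix.mulVecLin_apply, Matrix.mulVec_transpose])
  obtain ⟨f, hf0, hfmap⟩ := Submodule.exists_dual_map_eq_bot_of_notMem hz inferInstance
  set c : Fin b → K := fun i => f (fun j => if i = j then 1 else 0) with hc_def
  have hfc : ∀ w : Fin b → K, f w = w ⬝ᵥ c := by
    intro w
    rw [LinearMap.pi_apply_eq_sum_univ f w]
    simp [dotProduct, hc_def, smul_eq_mul]
  have hPc : P *ᵥ c = 0 := by
    funext i
    have hw : (Pi.single i 1 : Fin a → K) ᵥ* P ∈ LinearMap.range Pᵀ.mulVecLin :=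
      ⟨Pi.single i 1, by simp [Matrix.mulVecLin_apply, Matrix.mulVec_transpose]⟩
    have h0 : f ((Pi.single i 1 : Fin a → K) ᵥ* P) = 0 := by
      have hmem : f ((Pi.single i 1 : Fin a → K) ᵥ* P) ∈
          (LinearMap.range Pᵀ.mulVecLin).map f := Submodule.mem_map_of_mem hw
      rw [hfmap] at hmem; simpa using hmem
    rw [hfc] at h0
    rw [Matrix.single_one_vecMul] at h0
    simpa [Matrix.mulVec, dotProduct] using h0
  exact hf0 (by rw [hfc z]; exact h c hPc)

lemma exists_dual_pair {n : ℕ} (z1 z2 : Fin n → ℝ)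
    (hind : ∀ α β : ℝ, α • z1 + β • z2 = 0 → α = 0 ∧ β = 0) :
    ∃ a1 a2 : Fin n → ℝ, z1 ⬝ᵥ a1 = 1 ∧ z2 ⬝ᵥ a1 = 0 ∧ z1 ⬝ᵥ a2 = 0 ∧ z2 ⬝ᵥ a2 = 1 := by
  let f1 : (Fin n → ℝ) →ₗ[ℝ] ℝ :=
    { toFun := fun w => z1 ⬝ᵥ w
      map_add' := fun x y => dotProduct_add z1 x y
      map_smul' := fun c x => dotProduct_smul c z1 x }
  let f2 : (Fin n → ℝ) →ₗ[ℝ] ℝ :=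
    { toFun := fun w => z2 ⬝ᵥ w
      map_add' := fun x y => dotProduct_add z2 x y
      map_smul' := fun c x => dotProduct_smul c z2 x }
  let φ : (Fin n → ℝ) →ₗ[ℝ] ℝ × ℝ := LinearMap.prod f1 f2
  have hsurj : LinearMap.range φ = ⊤ := by
    by_contra hne
    obtain ⟨f, hf0, hfmap⟩ :=
      Submodule.exists_dual_map_eq_bot_of_lt_top (lt_top_iff_ne_top.mpr hne) inferInstance
    set α := f (1, 0) with hα
    set β := f (0, 1) with hβ
    have hform : ∀ xy : ℝ × ℝ, f xy = xy.1 * α + xy.2 * β := by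
      rintro ⟨x, y⟩
      have hxy : (x, y) = x • ((1 : ℝ), (0 : ℝ)) + y • ((0 : ℝ), (1 : ℝ)) := by
        simp [Prod.ext_iff]
      calc f (x, y) = f (x • ((1:ℝ), (0:ℝ)) + y • ((0:ℝ), (1:ℝ))) := by rw [← hxy]
        _ = x * f (1, 0) + y * f (0, 1) := by
            rw [map_add, _root_.map_smul, _root_.map_smul, smul_eq_mul, smul_eq_mul]
        _ = x * α + y * β := by rw [← hα, ← hβ]
    have hzero : ∀ w : Fin n → ℝ, (α • z1 + β • z2) ⬝ᵥ w = 0 := by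
      intro w
      have hw : f (φ w) = 0 := by
        have hmem : f (φ w) ∈ (LinearMap.range φ).map f :=
          Submodule.mem_map_of_mem ⟨w, rfl⟩
        rw [hfmap] at hmem; simpa using hmem
      rw [hform (φ w)] at hw
      simp only [φ, LinearMap.prod_apply, Pi.prod] at hw
      rw [add_dotProduct, smul_dotProduct, smul_dotProduct]
      simp only [f1, f2, LinearMap.coe_mk, AddHom.coe_mk] at hw
      rw [smul_eq_mul, smul_eq_mul]
      simp only [Function.prod] at hw
      linarith [hw]
    have hvec : α • z1 + β • z2 = 0 := by
      funext i
      have := hzero (Pi.single i 1)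
      simpa [dotProduct_single] using this
    obtain ⟨hα0, hβ0⟩ := hind α β hvec
    refine hf0 (LinearMap.ext fun xy => ?_)
    rw [hform xy, hα0, hβ0]
    simp
  have h1 : ((1 : ℝ), (0 : ℝ)) ∈ LinearMap.range φ := by rw [hsurj]; trivial
  have h2 : ((0 : ℝ), (1 : ℝ)) ∈ LinearMap.range φ := by rw [hsurj]; trivial
  obtain ⟨a1, ha1⟩ := h1
  obtain ⟨a2, ha2⟩ := h2
  exact ⟨a1, a2, congrArg Prod.fst ha1, congrArg Prod.snd ha1,
    congrArg Prod.fst ha2, congrArg Prod.snd ha2⟩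

lemma exists_real_dir {n : ℕ} (z : Fin n → ℂ) (hz : z ≠ 0)
    {α β : ℝ} (hne : ¬(α = 0 ∧ β = 0)) (hlin : α • rev z + β • imv z = 0) :
    ∃ (γ : ℂ) (ζ : Fin n → ℝ), γ ≠ 0 ∧ ζ ≠ 0 ∧ z = γ • cxv ζ := by
  by_cases hβ : β = 0
  · have hα : α ≠ 0 := by tauto
    have hz1 : rev z = 0 := by
      have h0 : α • rev z = 0 := by
        funext i
        have := congrFun hlin i
        simpa [hβ] using this
      funext i
      have := congrFun h0 i
      simp only [Pi.smul_apply, smul_eq_mul, Pi.zero_apply] at this ⊢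
      exact (mul_eq_zero.mp this).resolve_left hα
    refine ⟨Complex.I, imv z, Complex.I_ne_zero, ?_, ?_⟩
    · intro h0
      apply hz
      funext i
      exact Complex.ext (congrFun hz1 i) (congrFun h0 i)
    · funext i
      have hre : (z i).re = 0 := congrFun hz1 i
      simp [cxv, Complex.ext_iff, hre, imv]
  · set c := -α / β with hc
    have hz2 : imv z = c • rev z := by
      funext i
      have := congrFun hlin i
      simp only [Pi.add_apply, Pi.smul_apply, smul_eq_mul, Pi.zero_apply] at this
      rw [Pi.smul_apply, smul_eq_mul, hc, div_mul_eq_mul_div, eq_div_iff hβ]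
      linarith [this]
    have hz1 : rev z ≠ 0 := by
      intro h0
      apply hz
      rw [← recomb z, h0, hz2, h0]
      funext i; simp [cxv]
    refine ⟨1 + (c : ℂ) * Complex.I, rev z, ?_, hz1, ?_⟩
    · intro h0
      have := congrArg Complex.re h0
      simp at this
    · funext i
      have h2 : (z i).im = c * (z i).re := by
        have := congrFun hz2 i
        simpa [imv, rev] using this
      simp [cxv, Complex.ext_iff, Complex.add_re, Complex.add_im, Complex.mul_re,
        Complex.mul_im, h2, rev]

lemma ker_cx_finrank {a b : ℕ} (P : Matrix (Fin a) (Fin b) ℝ) :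
    finrank ℂ (LinearMap.ker (cx P).mulVecLin) = finrank ℝ (LinearMap.ker P.mulVecLin) := by
  set Kc := LinearMap.ker (cx P).mulVecLin with hKc
  set Kr := LinearMap.ker P.mulVecLin with hKr
  have mem_iff : ∀ x : Fin b → ℂ, x ∈ Kc ↔ rev x ∈ Kr ∧ imv x ∈ Kr := by
    intro x
    simp only [hKc, hKr, LinearMap.mem_ker, Matrix.mulVecLin_apply]
    constructor
    · intro hx
      refine ⟨?_, ?_⟩
      · rw [← rev_mulVec, hx]; funext i; simp [rev]
      · rw [← imv_mulVec, hx]; funext i; simp [imv]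
    · rintro ⟨h1, h2⟩
      rw [eq_zero_iff_rev_imv, rev_mulVec, imv_mulVec]
      exact ⟨h1, h2⟩
  let e : Kc ≃ₗ[ℝ] Kr × Kr := {
    toFun := fun x => (⟨rev x.1, ((mem_iff x.1).mp x.2).1⟩, ⟨imv x.1, ((mem_iff x.1).mp x.2).2⟩)
    map_add' := by
      intro x y
      ext i <;> simp [rev, imv]
    map_smul' := by
      intro r x
      ext i <;> simp [rev, imv, Complex.real_smul]
    invFun := fun p => ⟨cxv p.1.1 + Complex.I • cxv p.2.1, by
      rw [mem_iff]
      constructor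
      · rw [show rev (cxv p.1.1 + Complex.I • cxv p.2.1) = p.1.1 by funext i; simp [cxv, rev]]
        exact p.1.2
      · rw [show imv (cxv p.1.1 + Complex.I • cxv p.2.1) = p.2.1 by funext i; simp [cxv, imv]]
        exact p.2.2⟩
    left_inv := by
      intro x; ext1; exact recomb x.1
    right_inv := by
      intro p
      ext i <;> simp [rev, imv, cxv]
  }
  have h1 : finrank ℝ Kc = finrank ℝ Kr + finrank ℝ Kr := by
    rw [e.finrank_eq, Module.finrank_prod]
  have h2 : finrank ℝ Kc = 2 * finrank ℂ Kc := finrank_real_of_complex _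
  omega

lemma rank_cx {a b : ℕ} (P : Matrix (Fin a) (Fin b) ℝ) : (cx P).rank = P.rank := by
  have h1 := LinearMap.finrank_range_add_finrank_ker (cx P).mulVecLin
  have h2 := LinearMap.finrank_range_add_finrank_ker P.mulVecLin
  simp only [Module.finrank_pi, Fintype.card_fin] at h1 h2
  have h3 := ker_cx_finrank P
  have e1 : (cx P).rank = finrank ℂ (LinearMap.range (cx P).mulVecLin) := rfl
  have e2 : P.rank = finrank ℝ (LinearMap.range P.mulVecLin) := rfl
  omega

lemma rank_add_nullity' {a : ℕ} {J : Type*} [Fintype J] (P : Matrix (Fin a) J ℂ) :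
    P.rank + finrank ℂ (LinearMap.ker Pᵀ.mulVecLin) = a := by
  rw [← Matrix.rank_transpose P]
  have h := LinearMap.finrank_range_add_finrank_ker Pᵀ.mulVecLin
  simpa [Matrix.rank] using h

lemma rank_eq_rows_iff' {a : ℕ} {J : Type*} [Fintype J] (P : Matrix (Fin a) J ℂ) :
    P.rank = a ↔ ∀ v : Fin a → ℂ, v ᵥ* P = 0 → v = 0 := by
  have hrn := rank_add_nullity' P
  constructor
  · intro h v hv
    have h0 : finrank ℂ (LinearMap.ker Pᵀ.mulVecLin) = 0 := by omega
    have hker : LinearMap.ker Pᵀ.mulVecLin = ⊥ := Submodule.finrank_eq_zero.mp h0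
    have hv' : v ∈ LinearMap.ker Pᵀ.mulVecLin := by
      simp [LinearMap.mem_ker, Matrix.mulVecLin_apply, Matrix.mulVec_transpose, hv]
    rw [hker] at hv'; simpa using hv'
  · intro h
    have hker : LinearMap.ker Pᵀ.mulVecLin = ⊥ := by
      rw [Submodule.eq_bot_iff]
      intro v hv
      exact h v (by simpa [LinearMap.mem_ker, Matrix.mulVecLin_apply,
        Matrix.mulVec_transpose] using hv)
    rw [hker] at hrn; simpa using hrn

lemma rank_mul_eq_rank_iff' {k n : ℕ} {J : Type*} [Fintype J]
    (Mc : Matrix (Fin k) (Fin n) ℂ) (S : Matrix (Fin n) J ℂ) :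
    (Mc * S).rank = Mc.rank ↔ ∀ v : Fin k → ℂ, v ᵥ* (Mc * S) = 0 → v ᵥ* Mc = 0 := by
  have h1 := rank_add_nullity' (Mc * S)
  have h2 := rank_add_nullity' Mc
  have hle : LinearMap.ker Mcᵀ.mulVecLin ≤ LinearMap.ker (Mc * S)ᵀ.mulVecLin := by
    intro v hv
    simp only [LinearMap.mem_ker, Matrix.mulVecLin_apply, Matrix.mulVec_transpose] at hv ⊢
    rw [← Matrix.vecMul_vecMul, hv, Matrix.zero_vecMul]
  constructor
  · intro h v hv
    have hfr : finrank ℂ (LinearMap.ker (Mc * S)ᵀ.mulVecLin)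
        = finrank ℂ (LinearMap.ker Mcᵀ.mulVecLin) := by omega
    have heq : LinearMap.ker Mcᵀ.mulVecLin = LinearMap.ker (Mc * S)ᵀ.mulVecLin :=
      Submodule.eq_of_le_of_finrank_le hle (le_of_eq hfr)
    have hv' : v ∈ LinearMap.ker (Mc * S)ᵀ.mulVecLin := by
      simpa [LinearMap.mem_ker, Matrix.mulVecLin_apply, Matrix.mulVec_transpose] using hv
    rw [← heq] at hv'
    simpa [LinearMap.mem_ker, Matrix.mulVecLin_apply, Matrix.mulVec_transpose] using hv'
  · intro h
    have heq : LinearMap.ker (Mc * S)ᵀ.mulVecLin = LinearMap.ker Mcᵀ.mulVecLin := by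
      refine le_antisymm ?_ hle
      intro v hv
      simp only [LinearMap.mem_ker, Matrix.mulVecLin_apply, Matrix.mulVec_transpose] at hv ⊢
      exact h v hv
    rw [heq] at h1
    omega

lemma sum_elim_eq_zero {a b : Type*} {x : a → ℂ} {y : b → ℂ} :
    Sum.elim x y = 0 ↔ x = 0 ∧ y = 0 := by
  constructor
  · intro h
    constructor
    · funext i; exact congrFun h (Sum.inl i)
    · funext i; exact congrFun h (Sum.inr i)
  · rintro ⟨rfl, rfl⟩
    funext i; cases i <;> simp

lemma rank_fromColumns_rows_iff {a b c : ℕ} (P : Matrix (Fin a) (Fin b) ℂ)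
    (Q : Matrix (Fin a) (Fin c) ℂ) :
    (fromCols P Q).rank = a ↔ ∀ v : Fin a → ℂ, v ᵥ* P = 0 → v ᵥ* Q = 0 → v = 0 := by
  rw [rank_eq_rows_iff']
  constructor
  · intro h v h1 h2
    exact h v (by rw [Matrix.vecMul_fromCols, h1, h2]; exact sum_elim_eq_zero.mpr ⟨rfl, rfl⟩)
  · intro h v hv
    rw [Matrix.vecMul_fromCols, sum_elim_eq_zero] at hv
    exact h v hv.1 hv.2

lemma rank_mul_fromColumns_iff {k n b c : ℕ} (Mc : Matrix (Fin k) (Fin n) ℂ)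
    (P : Matrix (Fin n) (Fin b) ℂ) (Q : Matrix (Fin n) (Fin c) ℂ) :
    (Mc * fromCols P Q).rank = Mc.rank ↔
      ∀ v : Fin k → ℂ, v ᵥ* (Mc * P) = 0 → v ᵥ* (Mc * Q) = 0 → v ᵥ* Mc = 0 := by
  rw [rank_mul_eq_rank_iff']
  constructor
  · intro h v h1 h2
    refine h v ?_
    rw [Matrix.mul_fromCols, Matrix.vecMul_fromCols, h1, h2]
    exact sum_elim_eq_zero.mpr ⟨rfl, rfl⟩
  · intro h v hv
    rw [Matrix.mul_fromCols, Matrix.vecMul_fromCols, sum_elim_eq_zero] at hv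
    exact h v hv.1 hv.2

lemma vecMul_smul_one {a : ℕ} (lam : ℂ) (v : Fin a → ℂ) :
    v ᵥ* (lam • (1 : Matrix (Fin a) (Fin a) ℂ)) = lam • v := by
  funext j
  simp [Matrix.vecMul, dotProduct, Matrix.smul_apply, Matrix.one_apply, mul_comm,
    Finset.mul_sum, Finset.sum_ite_eq]

lemma col_mul {a b c : ℕ} (P : Matrix (Fin a) (Fin b) ℝ) (Q : Matrix (Fin b) (Fin c) ℝ)
    (t : Fin c) : (fun i => (P * Q) i t) = P *ᵥ (fun j => Q j t) := by
  funext i; simp [Matrix.mul_apply, Matrix.mulVec, dotProduct]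

lemma mem_Adat_iff {n m p q T k : ℕ}
    {B : Matrix (Fin n) (Fin m) ℝ} {C : Matrix (Fin p) (Fin n) ℝ}
    {D : Matrix (Fin p) (Fin m) ℝ} {E : Matrix (Fin n) (Fin q) ℝ}
    {F : Matrix (Fin p) (Fin q) ℝ}
    {U : Matrix (Fin m) (Fin T) ℝ} {X : Matrix (Fin n) (Fin (T + 1)) ℝ}
    {Y : Matrix (Fin p) (Fin T) ℝ}
    {M : Matrix (Fin k) (Fin n) ℝ} {N : Matrix (Fin k) (Fin p) ℝ}
    (hMN : LinearMap.ker (fromCols M N).mulVecLin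
      = LinearMap.range (fromRows E F).mulVecLin)
    {R : Matrix (Fin k) (Fin T) ℝ}
    (hR : R = M * (Xplus X - B * U) + N * (Y - C * Xminus X - D * U))
    (A : Matrix (Fin n) (Fin n) ℝ) :
    A ∈ Adat B C D E F U X Y ↔ M * A * Xminus X = R := by
  have pair_iff : ∀ (g : Fin n → ℝ) (h : Fin p → ℝ),
      M *ᵥ g + N *ᵥ h = 0 ↔ ∃ w : Fin q → ℝ, g = E *ᵥ w ∧ h = F *ᵥ w := by
    intro g h
    have h1 : M *ᵥ g + N *ᵥ h = 0 ↔ Sum.elim g h ∈ LinearMap.ker (fromCols M N).mulVecLin := by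
      rw [LinearMap.mem_ker, Matrix.mulVecLin_apply, Matrix.fromCols_mulVec_sumElim]
    rw [h1, hMN]
    constructor
    · rintro ⟨w, hw⟩
      refine ⟨w, ?_, ?_⟩
      · funext i; have := congrFun hw (Sum.inl i)
        simpa [Matrix.fromRows_mulVec] using this.symm
      · funext i; have := congrFun hw (Sum.inr i)
        simpa [Matrix.fromRows_mulVec] using this.symm
    · rintro ⟨w, rfl, rfl⟩
      exact ⟨w, by rw [Matrix.mulVecLin_apply, Matrix.fromRows_mulVec]⟩
  have mat_iff : ∀ (G : Matrix (Fin n) (Fin T) ℝ) (H : Matrix (Fin p) (Fin T) ℝ),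
      M * G + N * H = 0 ↔ ∃ W : Matrix (Fin q) (Fin T) ℝ, G = E * W ∧ H = F * W := by
    intro G H
    constructor
    · intro h0
      have ht : ∀ t : Fin T, ∃ w : Fin q → ℝ,
          (fun i => G i t) = E *ᵥ w ∧ (fun i => H i t) = F *ᵥ w := by
        intro t
        rw [← pair_iff]
        rw [← col_mul, ← col_mul]
        funext i
        have := congrFun (congrFun h0 i) t
        simpa using this
      choose w hw1 hw2 using ht
      refine ⟨Matrix.of fun j t => w t j, ?_, ?_⟩
      · ext i t
        have := congrFun (hw1 t) i
        simpa [Matrix.mul_apply, Matrix.mulVec, dotProduct] using this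
      · ext i t
        have := congrFun (hw2 t) i
        simpa [Matrix.mul_apply, Matrix.mulVec, dotProduct] using this
    · rintro ⟨W, rfl, rfl⟩
      have hME : M * E + N * F = 0 := by
        ext i j
        have h0 := (pair_iff (E *ᵥ Pi.single j 1) (F *ᵥ Pi.single j 1)).mpr
          ⟨Pi.single j 1, rfl, rfl⟩
        have h1 := congrFun h0 i
        rw [Pi.add_apply] at h1
        rw [Matrix.mulVec_mulVec, Matrix.mulVec_mulVec] at h1
        simpa [Matrix.mulVec, dotProduct, Pi.single_apply, Finset.sum_ite_eq'] using h1
      have heq : M * (E * W) + N * (F * W) = (M * E + N * F) * W := by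
        rw [Matrix.add_mul, Matrix.mul_assoc, Matrix.mul_assoc]
      rw [heq, hME, Matrix.zero_mul]
  have halg : M * (Xplus X - A * Xminus X - B * U) + N * (Y - C * Xminus X - D * U)
      = R - M * A * Xminus X := by
    rw [hR]
    simp only [Matrix.mul_sub, Matrix.mul_assoc]
    abel
  constructor
  · rintro ⟨W, h1, h2⟩
    have hG : Xplus X - A * Xminus X - B * U = E * W := by rw [h1]; abel
    have hH : Y - C * Xminus X - D * U = F * W := by rw [h2]; abel
    have h0 : M * (Xplus X - A * Xminus X - B * U) + N * (Y - C * Xminus X - D * U) = 0 :=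
      (mat_iff _ _).mpr ⟨W, hG, hH⟩
    rw [halg] at h0
    exact (sub_eq_zero.mp h0).symm
  · intro h
    have h0 : M * (Xplus X - A * Xminus X - B * U) + N * (Y - C * Xminus X - D * U) = 0 := by
      rw [halg, h, sub_self]
    obtain ⟨W, hG, hH⟩ := (mat_iff _ _).mp h0
    refine ⟨W, ?_, ?_⟩
    · rw [← hG]; abel
    · rw [← hH]; abel

lemma key_iff {n m p q T k : ℕ}
    (B : Matrix (Fin n) (Fin m) ℝ) (C : Matrix (Fin p) (Fin n) ℝ)
    (D : Matrix (Fin p) (Fin m) ℝ) (E : Matrix (Fin n) (Fin q) ℝ)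
    (F : Matrix (Fin p) (Fin q) ℝ)
    (U : Matrix (Fin m) (Fin T) ℝ) (X : Matrix (Fin n) (Fin (T + 1)) ℝ)
    (Y : Matrix (Fin p) (Fin T) ℝ)
    (M : Matrix (Fin k) (Fin n) ℝ) (N : Matrix (Fin k) (Fin p) ℝ)
    (hAdat : (Adat B C D E F U X Y).Nonempty)
    (hMN : LinearMap.ker (fromCols M N).mulVecLin
      = LinearMap.range (fromRows E F).mulVecLin)
    (R : Matrix (Fin k) (Fin T) ℝ)
    (hR : R = M * (Xplus X - B * U) + N * (Y - C * Xminus X - D * U))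
    (Λ : Set ℂ) (h2Λ : (2 : ℂ) ∈ Λ) :
    (∀ A ∈ Adat B C D E F U X Y, ∀ lam ∈ Λ,
        (fromCols (cx A - lam • 1) (cx B)).rank = n) ↔
      (LinearMap.ker M.mulVecLin ≤ LinearMap.range B.mulVecLin ∧
        ∀ lam ∈ Λ,
          (fromCols (cx R - lam • (cx M * cx (Xminus X))) (cx M * cx B)).rank = M.rank) := by
  obtain ⟨A₀, hA₀⟩ := hAdat
  have hA0R : M * A₀ * Xminus X = R := (mem_Adat_iff hMN hR A₀).mp hA₀
  have hrw : ∀ A' : Matrix (Fin n) (Fin n) ℝ, M * A' * Xminus X = R → ∀ lam : ℂ,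
      fromCols (cx R - lam • (cx M * cx (Xminus X))) (cx M * cx B)
        = cx M * fromCols ((cx A' - lam • 1) * cx (Xminus X)) (cx B) := by
    intro A' hA' lam
    have e2 : cx M * (cx A' * cx (Xminus X)) = cx R := by
      rw [← Matrix.mul_assoc, ← cx_mul, ← cx_mul, hA']
    have e3 : cx M * ((cx A' - lam • 1) * cx (Xminus X))
        = cx R - lam • (cx M * cx (Xminus X)) := by
      rw [Matrix.sub_mul, Matrix.smul_mul, Matrix.one_mul, Matrix.mul_sub, Matrix.mul_smul, e2]
    rw [Matrix.mul_fromCols, e3]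
  constructor
  · intro hfull
    constructor
    · -- ker M ⊆ im B
      intro x hx
      have hx0 : M *ᵥ x = 0 := by
        have h' := hx
        simp only [LinearMap.mem_ker, Matrix.mulVecLin_apply] at h'
        exact h'
      have hdual : ∀ z : Fin n → ℝ, Bᵀ *ᵥ z = 0 → x ⬝ᵥ z = 0 := by
        intro z hzB'
        have hzB : z ᵥ* B = 0 := by rwa [Matrix.mulVec_transpose] at hzB'
        by_contra hsne
        set s := x ⬝ᵥ z with hs
        have hs0 : s ≠ 0 := hsne
        set c : Fin n → ℝ := s⁻¹ • ((2 : ℝ) • z - z ᵥ* A₀) with hc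
        set A : Matrix (Fin n) (Fin n) ℝ := A₀ + vecMulVec x c with hA
        have hmem : A ∈ Adat B C D E F U X Y := by
          rw [mem_Adat_iff hMN hR, hA, Matrix.mul_add, Matrix.add_mul, mul_vecMulVec, hx0,
            zero_vecMulVec', Matrix.zero_mul, add_zero, hA0R]
        have hzA : z ᵥ* A = (2 : ℝ) • z := by
          rw [hA, Matrix.vecMul_add, _root_.vecMul_vecMulVec, dotProduct_comm z x, ← hs, hc,
            smul_smul, mul_inv_cancel₀ hs0, one_smul]
          abel
        have hrk := hfull A hmem 2 h2Λ
        have hz0 : cxv z = 0 := by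
          refine (rank_fromColumns_rows_iff _ _).mp hrk (cxv z) ?_ ?_
          · rw [Matrix.vecMul_sub, vecMul_smul_one, cxv_vecMul, hzA,
              show (2 : ℂ) = ((2 : ℝ) : ℂ) by norm_num, cxv_smul]
            exact sub_self _
          · rw [cxv_vecMul, hzB]
            exact cxv_eq_zero.mpr rfl
        have hzz : z = 0 := cxv_eq_zero.mp hz0
        exact hs0 (by rw [hs, hzz, dotProduct_zero])
      obtain ⟨η, hη⟩ := mem_rowSpace_of Bᵀ x hdual
      refine ⟨η, ?_⟩
      rw [Matrix.mulVecLin_apply, ← Matrix.vecMul_transpose]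
      exact hη.symm
    · -- rank condition
      intro lam hlam
      rw [hrw A₀ hA0R lam, ← rank_cx M, rank_mul_fromColumns_iff]
      intro v h1 h2
      rw [← Matrix.vecMul_vecMul] at h1 h2
      set z := v ᵥ* cx M with hzdef
      by_contra hz
      rw [← Matrix.vecMul_vecMul, Matrix.vecMul_sub, vecMul_smul_one, Matrix.sub_vecMul,
        sub_eq_zero] at h1
      -- h1 : (z ᵥ* cx A₀) ᵥ* cx (Xminus X) = (lam • z) ᵥ* cx (Xminus X)
      by_cases hdep : ∀ α β : ℝ, α • rev z + β • imv z = 0 → α = 0 ∧ β = 0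
      · obtain ⟨a1, a2, h11, h21, h12, h22⟩ := exists_dual_pair (rev z) (imv z) hdep
        set u : Fin n → ℂ := lam • z - z ᵥ* cx A₀ with hu
        have huX : u ᵥ* cx (Xminus X) = 0 := by
          rw [hu, Matrix.sub_vecMul, h1, sub_self]
        have hu1X : rev u ᵥ* Xminus X = 0 := by
          rw [← rev_vecMul, huX]; funext j; simp [rev]
        have hu2X : imv u ᵥ* Xminus X = 0 := by
          rw [← imv_vecMul, huX]; funext j; simp [imv]
        set Δ : Matrix (Fin n) (Fin n) ℝ := vecMulVec a1 (rev u) + vecMulVec a2 (imv u) with hΔ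
        have hΔX : Δ * Xminus X = 0 := by
          rw [hΔ, Matrix.add_mul, vecMulVec_mul, vecMulVec_mul, hu1X, hu2X,
            vecMulVec_zero', vecMulVec_zero', add_zero]
        set A : Matrix (Fin n) (Fin n) ℝ := A₀ + Δ with hA
        have hmem : A ∈ Adat B C D E F U X Y := by
          rw [mem_Adat_iff hMN hR, hA, Matrix.mul_add, Matrix.add_mul,
            Matrix.mul_assoc M Δ (Xminus X), hΔX, Matrix.mul_zero, add_zero, hA0R]
        have hzΔ : z ᵥ* cx Δ = u := by
          refine ext_rev_imv ?_ ?_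
          · rw [rev_vecMul, hΔ, Matrix.vecMul_add, _root_.vecMul_vecMulVec, _root_.vecMul_vecMulVec,
              h11, h12, one_smul, zero_smul, add_zero]
          · rw [imv_vecMul, hΔ, Matrix.vecMul_add, _root_.vecMul_vecMulVec, _root_.vecMul_vecMulVec,
              h21, h22, zero_smul, one_smul, zero_add]
        have hfin1 : z ᵥ* (cx A - lam • 1) = 0 := by
          rw [hA, cx_add, Matrix.vecMul_sub, Matrix.vecMul_add, hzΔ, vecMul_smul_one, hu]
          abel
        exact hz ((rank_fromColumns_rows_iff _ _).mp (hfull A hmem lam hlam) z hfin1 h2)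
      · have hdep' : ∃ α β : ℝ, ¬(α = 0 ∧ β = 0) ∧ α • rev z + β • imv z = 0 := by
          by_contra hcon
          exact hdep (fun α β hab => by
            by_contra hne
            exact hcon ⟨α, β, hne, hab⟩)
        obtain ⟨α, β, hne, hlin⟩ := hdep'
        obtain ⟨γ, ζ, hγ, hζ, hzγ⟩ := exists_real_dir z hz hne hlin
        have hζB : ζ ᵥ* B = 0 := by
          have h2' : (γ • cxv ζ) ᵥ* cx B = 0 := by rw [← hzγ]; exact h2
          rw [Matrix.smul_vecMul, cxv_vecMul] at h2'
          rcases smul_eq_zero.mp h2' with h | h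
          · exact absurd h hγ
          · exact cxv_eq_zero.mp h
        set r0 : Fin T → ℝ := (ζ ᵥ* A₀) ᵥ* Xminus X with hr0def
        set r1 : Fin T → ℝ := ζ ᵥ* Xminus X with hr1def
        have hstar : cxv r0 = lam • cxv r1 := by
          have e1 : (z ᵥ* cx A₀) ᵥ* cx (Xminus X) = γ • cxv r0 := by
            rw [hzγ, Matrix.smul_vecMul, cxv_vecMul, Matrix.smul_vecMul, cxv_vecMul, ← hr0def]
          have e2 : (lam • z) ᵥ* cx (Xminus X) = γ • (lam • cxv r1) := by
            rw [hzγ, smul_comm lam γ, Matrix.smul_vecMul, Matrix.smul_vecMul, cxv_vecMul,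
              ← hr1def]
          have hg : γ • cxv r0 = γ • (lam • cxv r1) := by rw [← e1, ← e2]; exact h1
          exact smul_right_injective _ hγ hg
        have hexp : ∀ μ : ℝ, (μ • ζ - ζ ᵥ* A₀) ᵥ* Xminus X = μ • r1 - r0 := by
          intro μ
          rw [Matrix.sub_vecMul, Matrix.smul_vecMul, ← hr1def, ← hr0def]
        have contra : ∀ μ : ℝ, ((μ : ℝ) : ℂ) ∈ Λ → μ • r1 - r0 = 0 → False := by
          intro μ hμΛ h00
          obtain ⟨j, hj⟩ := Function.ne_iff.mp hζ
          have hj' : ζ j ≠ 0 := by simpa using hj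
          set a : Fin n → ℝ := (ζ j)⁻¹ • (Pi.single j (1 : ℝ) : Fin n → ℝ) with ha
          have hζa : ζ ⬝ᵥ a = 1 := by
            rw [ha, dotProduct_smul, dotProduct_single, mul_one, smul_eq_mul,
              inv_mul_cancel₀ hj']
          set u0 : Fin n → ℝ := μ • ζ - ζ ᵥ* A₀ with hu0
          have hu0X : u0 ᵥ* Xminus X = 0 := by rw [hu0, hexp, h00]
          set A : Matrix (Fin n) (Fin n) ℝ := A₀ + vecMulVec a u0 with hA
          have hmem : A ∈ Adat B C D E F U X Y := by
            rw [mem_Adat_iff hMN hR, hA, Matrix.mul_add, Matrix.add_mul, mul_vecMulVec,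
              vecMulVec_mul, hu0X, vecMulVec_zero', add_zero, hA0R]
          have hζA : ζ ᵥ* A = μ • ζ := by
            rw [hA, Matrix.vecMul_add, _root_.vecMul_vecMulVec, hζa, one_smul, hu0]
            abel
          have hz0 : cxv ζ = 0 := by
            refine (rank_fromColumns_rows_iff _ _).mp (hfull A hmem (μ : ℂ) hμΛ) (cxv ζ) ?_ ?_
            · rw [Matrix.vecMul_sub, vecMul_smul_one, cxv_vecMul, hζA, cxv_smul]
              exact sub_self _
            · rw [cxv_vecMul, hζB]
              exact cxv_eq_zero.mpr rfl
          exact hζ (cxv_eq_zero.mp hz0)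
        by_cases hr1 : r1 = 0
        · have hr0 : r0 = 0 := by
            have hcc : cxv r0 = 0 := by
              rw [hstar, hr1]
              funext t; simp [cxv]
            exact cxv_eq_zero.mp hcc
          exact contra 2 (by simpa using h2Λ) (by rw [hr1, hr0]; simp)
        · obtain ⟨t, ht⟩ := Function.ne_iff.mp hr1
          have ht' : r1 t ≠ 0 := by simpa using ht
          set μ := r0 t / r1 t with hμ
          have hlamval : lam = (μ : ℂ) := by
            have hh := congrFun hstar t
            simp only [cxv, Pi.smul_apply, smul_eq_mul] at hh
            have hrne : ((r1 t : ℝ) : ℂ) ≠ 0 := by exact_mod_cast ht'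
            rw [hμ]
            push_cast
            rw [eq_div_iff hrne]
            exact hh.symm
          have hr0eq : r0 = μ • r1 := by
            have hcc : cxv r0 = cxv (μ • r1) := by rw [hstar, hlamval, cxv_smul]
            funext t'
            have h2c := congrFun hcc t'
            simp only [cxv, Pi.smul_apply, smul_eq_mul] at h2c
            show r0 t' = μ * r1 t'
            exact_mod_cast h2c
          exact contra μ (by rw [← hlamval]; exact hlam) (by rw [hr0eq, sub_self])
  · rintro ⟨hker, hrank⟩ A hA lam hlam
    have hAR : M * A * Xminus X = R := (mem_Adat_iff hMN hR A).mp hA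
    rw [rank_fromColumns_rows_iff]
    intro z hz1 hz2
    have hdz : ∀ x : Fin n → ℂ, cx M *ᵥ x = 0 → z ⬝ᵥ x = 0 := by
      intro x hxx
      have hre : rev x ∈ LinearMap.ker M.mulVecLin := by
        simp only [LinearMap.mem_ker, Matrix.mulVecLin_apply]
        rw [← rev_mulVec, hxx]; funext i; simp [rev]
      have him : imv x ∈ LinearMap.ker M.mulVecLin := by
        simp only [LinearMap.mem_ker, Matrix.mulVecLin_apply]
        rw [← imv_mulVec, hxx]; funext i; simp [imv]
      obtain ⟨η1, hη1⟩ := hker hre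
      obtain ⟨η2, hη2⟩ := hker him
      simp only [Matrix.mulVecLin_apply] at hη1 hη2
      have hxe : x = cx B *ᵥ (cxv η1 + Complex.I • cxv η2) := by
        rw [Matrix.mulVec_add, Matrix.mulVec_smul, cxv_mulVec, cxv_mulVec, hη1, hη2]
        exact (recomb x).symm
      rw [hxe, Matrix.dotProduct_mulVec, hz2, zero_dotProduct]
    obtain ⟨v, hv⟩ := mem_rowSpace_of (cx M) z hdz
    have hq := hrank lam hlam
    rw [hrw A hAR lam, ← rank_cx M] at hq
    have hv1 : v ᵥ* (cx M * ((cx A - lam • 1) * cx (Xminus X))) = 0 := by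
      rw [← Matrix.vecMul_vecMul, ← hv, ← Matrix.vecMul_vecMul, hz1, Matrix.zero_vecMul]
    have hv2 : v ᵥ* (cx M * cx B) = 0 := by
      rw [← Matrix.vecMul_vecMul, ← hv, hz2]
    have hv0 := (rank_mul_fromColumns_iff _ _ _).mp hq v hv1 hv2
    exact hv.trans hv0

end Aux

/-- informativity of the data for controllability / stabilizability of (A,B). -/
theorem informative_controllability_stabilizability (n m p q T k : ℕ)
    (hn : 1 ≤ n) (hm : 1 ≤ m) (hp : 1 ≤ p) (hq : 1 ≤ q) (hT : 1 ≤ T)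
    (B : Matrix (Fin n) (Fin m) ℝ) (C : Matrix (Fin p) (Fin n) ℝ)
    (D : Matrix (Fin p) (Fin m) ℝ) (E : Matrix (Fin n) (Fin q) ℝ)
    (F : Matrix (Fin p) (Fin q) ℝ)
    (U : Matrix (Fin m) (Fin T) ℝ) (X : Matrix (Fin n) (Fin (T + 1)) ℝ)
    (Y : Matrix (Fin p) (Fin T) ℝ)
    (M : Matrix (Fin k) (Fin n) ℝ) (N : Matrix (Fin k) (Fin p) ℝ)
    (hAdat : (Adat B C D E F U X Y).Nonempty)
    (hMN : LinearMap.ker (fromCols M N).mulVecLin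
      = LinearMap.range (fromRows E F).mulVecLin)
    (R : Matrix (Fin k) (Fin T) ℝ)
    (hR : R = M * (Xplus X - B * U) + N * (Y - C * Xminus X - D * U)) :
    ((∀ A ∈ Adat B C D E F U X Y, ∀ lam : ℂ,
        (fromCols (cx A - lam • 1) (cx B)).rank = n) ↔
      (LinearMap.ker M.mulVecLin ≤ LinearMap.range B.mulVecLin ∧
        ∀ lam : ℂ,
          (fromCols (cx R - lam • (cx M * cx (Xminus X))) (cx M * cx B)).rank = M.rank))
    ∧
    ((∀ A ∈ Adat B C D E F U X Y, ∀ lam : ℂ, 1 ≤ ‖lam‖ →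
        (fromCols (cx A - lam • 1) (cx B)).rank = n) ↔
      (LinearMap.ker M.mulVecLin ≤ LinearMap.range B.mulVecLin ∧
        ∀ lam : ℂ, 1 ≤ ‖lam‖ →
          (fromCols (cx R - lam • (cx M * cx (Xminus X))) (cx M * cx B)).rank
            = M.rank)) := by
  constructor
  · have h := key_iff B C D E F U X Y M N hAdat hMN R hR Set.univ (Set.mem_univ 2)
    constructor
    · intro hL
      have h' := h.mp (fun A hA lam _ => hL A hA lam)
      exact ⟨h'.1, fun lam => h'.2 lam (Set.mem_univ lam)⟩
    · intro hRt A hA lam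
      exact h.mpr ⟨hRt.1, fun lam _ => hRt.2 lam⟩ A hA lam (Set.mem_univ lam)
  · have h2mem : (2 : ℂ) ∈ {lam : ℂ | 1 ≤ ‖lam‖} := by
      rw [Set.mem_setOf_eq, Complex.norm_two]
      norm_num
    have h := key_iff B C D E F U X Y M N hAdat hMN R hR
      {lam : ℂ | 1 ≤ ‖lam‖} h2mem
    constructor
    · intro hL
      have h' := h.mp (fun A hA lam hl => hL A hA lam hl)
      exact ⟨h'.1, fun lam hl => h'.2 lam hl⟩
    · intro hRt A hA lam hl
      exact h.mpr ⟨hRt.1, fun lam hl => hRt.2 lam hl⟩ A hA lam hl
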